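/- Let t_l be nonnegative reals and define lambda(varpi, m) = sum over l from m to varpi of C(varpi - m, varpi - l) * t_l. Then for m <= varpi and q with t_l = (p/(1-p))^l, one has lambda(varpi, m)/lambda(n, 0) = p^m * (1-p)^(n - varpi) for 0 < p < 1 and varpi <= n. -/

import Mathlib

open Finset

lemma key_sum (s : ℝ) (m k : ℕ) :
    ∑ l ∈ Finset.Icc m (m + k), ((k.choose (m + k - l) : ℝ)) * s ^ l
      = s ^ m * (1 + s) ^ k := by
  rw [← Finset.Ico_add_one_right_eq_Icc, Finset.sum_Ico_eq_sum_range]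
  have h1 : m + k + 1 - m = k + 1 := by omega
  rw [h1]
  have : ∀ j ∈ Finset.range (k + 1),
      ((k.choose (m + k - (m + j)) : ℝ)) * s ^ (m + j)
        = s ^ m * (s ^ j * 1 ^ (k - j) * (k.choose j : ℝ)) := by
    intro j hj
    simp only [Finset.mem_range] at hj
    have h2 : m + k - (m + j) = k - j := by omega
    rw [h2, Nat.choose_symm (by omega : j ≤ k), pow_add]
    ring
  rw [Finset.sum_congr rfl this, ← Finset.mul_sum, ← add_pow]
  ring_nf

theorem stmt4 (p : ℝ) (hp0 : 0 < p) (hp1 : p < 1) (m varpi n : ℕ)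
    (hm : m ≤ varpi) (hv : varpi ≤ n) (t : ℕ → ℝ)
    (ht : ∀ l, t l = (p / (1 - p)) ^ l) :
    (∑ l ∈ Finset.Icc m varpi, ((varpi - m).choose (varpi - l) : ℝ) * t l) /
      (∑ l ∈ Finset.Icc 0 n, ((n - 0).choose (n - l) : ℝ) * t l)
      = p ^ m * (1 - p) ^ (n - varpi) := by
  have h1p : (0:ℝ) < 1 - p := by linarith
  set s : ℝ := p / (1 - p) with hs
  have hnum : (∑ l ∈ Finset.Icc m varpi, ((varpi - m).choose (varpi - l) : ℝ) * t l)
      = s ^ m * (1 + s) ^ (varpi - m) := by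
    have hv' : varpi = m + (varpi - m) := by omega
    rw [hv']
    simp only [ht]
    have h2 : m + (varpi - m) - m = varpi - m := by omega
    rw [h2]
    exact key_sum s m (varpi - m)
  have hden : (∑ l ∈ Finset.Icc 0 n, ((n - 0).choose (n - l) : ℝ) * t l)
      = (1 + s) ^ n := by
    simp only [ht]
    have := key_sum s 0 n
    simpa using this
  have h1s : 1 + s = 1 / (1 - p) := by
    field_simp [hs]
    rw [hs, add_mul, div_mul_cancel₀ _ h1p.ne']
    ring
  have hsplit : (1-p)^n = (1-p)^(n-varpi) * (1-p)^(varpi-m) * (1-p)^m := by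
    rw [← pow_add, ← pow_add]
    congr 1
    omega
  rw [hnum, hden, h1s, hs, div_pow, div_pow, div_pow, one_pow]
  field_simp
  rw [hsplit]
  ring
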